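/- Let d be a prime, F = ℤ/dℤ, ω = exp(2πi/d), and let C ⊆ F^n be a linear subspace. For x, z, v ∈ F^n define the unit vector φ_{x,z,v} = |C|^{−1/2}·Σ_{w∈C} ω^{z·w} e_{w+v+x} in ℂ^{F^n}. Then for any transversal Γ_z of F^n/C^⊥ and any x, v ∈ F^n, (1/|C|)·Σ_{z∈Γ_z} |φ_{x,z,v}⟩⟨φ_{x,z,v}| = (1/|C|)·Σ_{w∈C} |e_{w+v+x}⟩⟨e_{w+v+x}| as linear operators on ℂ^{F^n}. -/
import Mathlib


/- STATEMENT 15 (Shor–Preskill mixture identity):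
   (1/|C|)·Σ_{z∈Γ_z} |φ_{x,z,v}⟩⟨φ_{x,z,v}| = (1/|C|)·Σ_{w∈C} |e_{w+v+x}⟩⟨e_{w+v+x}|. -/

open scoped BigOperators

noncomputable section

/-- Dot product `x·y = Σᵢ xᵢ yᵢ` in `ℤ/dℤ`. -/
def dotp {d n : ℕ} (x y : Fin n → ZMod d) : ZMod d := ∑ i, x i * y i

/-- `C^⊥ = {y : ∀ x ∈ C, x·y = 0}`. -/
def dualSet {d n : ℕ} (C : Set (Fin n → ZMod d)) : Set (Fin n → ZMod d) :=
  {y | ∀ x ∈ C, dotp x y = 0}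

/-- A transversal of `Fⁿ/C^⊥`: contains exactly one element of each coset of `C^⊥`. -/
def IsTransversal {d n : ℕ} (C : Set (Fin n → ZMod d)) (Γ : Set (Fin n → ZMod d)) : Prop :=
  ∀ y : Fin n → ZMod d, ∃! g, g ∈ Γ ∧ y - g ∈ dualSet C

/-- `ω = exp(2πi/d)`. -/
def omg (d : ℕ) : ℂ := Complex.exp (2 * Real.pi * Complex.I / d)

/-- The standard basis vector `e_c` of `ℂ^{Fⁿ}`. -/
def stdv {d n : ℕ} (c : Fin n → ZMod d) : (Fin n → ZMod d) → ℂ :=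
  fun a => if a = c then 1 else 0

/-- The CSS basis state `φ_{x,z,v} = |C|^{−1/2}·Σ_{w∈C} ω^{z·w} e_{w+v+x}`. -/
def phiv {d n : ℕ} (C : Submodule (ZMod d) (Fin n → ZMod d))
    (x z v : Fin n → ZMod d) : (Fin n → ZMod d) → ℂ :=
  fun a => (1 / (Real.sqrt (Nat.card C) : ℂ)) *
    ∑ᶠ w ∈ (C : Set (Fin n → ZMod d)), omg d ^ (dotp z w).val * stdv (w + v + x) a

/-- The rank-one operator `|u⟩⟨u|`, as a matrix: `(|u⟩⟨u|)_{a,b} = u(a)·conj(u(b))`. -/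
def outer {d n : ℕ} (u : (Fin n → ZMod d) → ℂ) :
    Matrix (Fin n → ZMod d) (Fin n → ZMod d) ℂ :=
  Matrix.vecMulVec u fun b => starRingEnd ℂ (u b)

namespace Stmt15

open scoped Classical

variable {d n : ℕ}

lemma dotp_comm (x y : Fin n → ZMod d) : dotp x y = dotp y x := by
  simp [dotp, mul_comm]

lemma dotp_add_right (z x y : Fin n → ZMod d) : dotp z (x + y) = dotp z x + dotp z y := by
  simp [dotp, mul_add, Finset.sum_add_distrib]

lemma dotp_sub_right (z x y : Fin n → ZMod d) : dotp z (x - y) = dotp z x - dotp z y := by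
  simp [dotp, mul_sub, Finset.sum_sub_distrib]

lemma dotp_add_left (x y z : Fin n → ZMod d) : dotp (x + y) z = dotp x z + dotp y z := by
  simp [dotp, add_mul, Finset.sum_add_distrib]

lemma dotp_sub_left (x y z : Fin n → ZMod d) : dotp (x - y) z = dotp x z - dotp y z := by
  simp [dotp, sub_mul, Finset.sum_sub_distrib]

lemma dotp_neg_right (z x : Fin n → ZMod d) : dotp z (-x) = - dotp z x := by
  simp [dotp, Finset.sum_neg_distrib]

lemma dotp_smul_left (c : ZMod d) (x y : Fin n → ZMod d) :
    dotp (c • x) y = c * dotp x y := by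
  simp [dotp, Finset.mul_sum, mul_assoc]

lemma dotp_zero_right (z : Fin n → ZMod d) : dotp z 0 = 0 := by simp [dotp]

/-- A d-th root: ω^d = 1. -/
lemma omg_pow_d [NeZero d] : omg d ^ d = 1 :=
  (Complex.isPrimitiveRoot_exp d (NeZero.ne d)).pow_eq_one

lemma omg_ne_one (hd : 1 < d) : omg d ≠ 1 :=
  (Complex.isPrimitiveRoot_exp d (by omega)).ne_one hd

/-- The character χ(k) = ω^{k.val}. -/
def chi (d : ℕ) (k : ZMod d) : ℂ := omg d ^ k.val

lemma omg_pow_mod [NeZero d] (m : ℕ) : omg d ^ (m % d) = omg d ^ m := by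
  conv_rhs => rw [← Nat.mod_add_div m d]
  rw [pow_add, pow_mul, omg_pow_d, one_pow, mul_one]

lemma chi_add [NeZero d] (a b : ZMod d) : chi d (a + b) = chi d a * chi d b := by
  rw [chi, ZMod.val_add, omg_pow_mod, pow_add]; rfl

lemma chi_zero [NeZero d] : chi d (0 : ZMod d) = 1 := by
  simp [chi, ZMod.val_zero]

lemma conj_omg [NeZero d] : starRingEnd ℂ (omg d) = (omg d)⁻¹ := by
  rw [omg, ← Complex.exp_conj, ← Complex.exp_neg]
  congr 1
  have : (2 * (Real.pi : ℂ) * Complex.I / d) = ((2 * Real.pi / d : ℝ) : ℂ) * Complex.I := by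
    push_cast; ring
  rw [this, map_mul, Complex.conj_ofReal, Complex.conj_I]
  ring

lemma chi_one (hd2 : 1 < d) : chi d (1 : ZMod d) = omg d := by
  haveI : Fact (1 < d) := ⟨hd2⟩
  rw [chi, ZMod.val_one, pow_one]

lemma conj_chi [NeZero d] (k : ZMod d) : starRingEnd ℂ (chi d k) = chi d (-k) := by
  have h1 : chi d (-k) * chi d k = 1 := by rw [← chi_add, neg_add_cancel, chi_zero]
  have h2 : starRingEnd ℂ (chi d k) * chi d k = 1 := by
    rw [chi, map_pow, conj_omg, inv_pow, inv_mul_cancel₀]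
    exact pow_ne_zero _ (Complex.exp_ne_zero _)
  rw [eq_inv_of_mul_eq_one_left h2, ← eq_inv_of_mul_eq_one_left h1]

/-- Translation trick: a sum of χ∘f over a set stable under a shift raising f by 1 vanishes. -/
lemma sum_chi_zero [NeZero d] (hd2 : 1 < d) (s : Finset (Fin n → ZMod d))
    (f : (Fin n → ZMod d) → ZMod d) (σ τ : (Fin n → ZMod d) → (Fin n → ZMod d))
    (hσ : ∀ z ∈ s, σ z ∈ s) (hτ : ∀ z ∈ s, τ z ∈ s)
    (hστ : ∀ z ∈ s, τ (σ z) = z) (hτσ : ∀ z ∈ s, σ (τ z) = z)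
    (hf : ∀ z ∈ s, f (σ z) = f z + 1) :
    ∑ z ∈ s, chi d (f z) = 0 := by
  have key : ∑ z ∈ s, chi d (f z) = ∑ z ∈ s, chi d (f z) * omg d := by
    refine Finset.sum_nbij' τ σ hτ hσ hτσ hστ ?_
    intro z hz
    have h : f z = f (τ z) + 1 := by rw [← hf _ (hτ _ hz), hτσ _ hz]
    rw [h, chi_add, chi_one hd2]
  rw [← Finset.sum_mul] at key
  have h0 : (∑ z ∈ s, chi d (f z)) * (omg d - 1) = 0 := by
    rw [mul_sub, mul_one, ← key, sub_self]
  rcases mul_eq_zero.mp h0 with h | h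
  · exact h
  · exact absurd (sub_eq_zero.mp h) (omg_ne_one hd2)


section Sums
variable [NeZero d]
variable (C : Submodule (ZMod d) (Fin n → ZMod d)) (Γz : Set (Fin n → ZMod d))

/-- Finset versions of the sets involved. -/
def Ct (C : Submodule (ZMod d) (Fin n → ZMod d)) : Finset (Fin n → ZMod d) :=
  (Set.toFinite (C : Set (Fin n → ZMod d))).toFinset

def Γt (Γz : Set (Fin n → ZMod d)) : Finset (Fin n → ZMod d) :=
  (Set.toFinite Γz).toFinset

lemma mem_Ct {w : Fin n → ZMod d} : w ∈ Ct C ↔ w ∈ C :=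
  Set.Finite.mem_toFinset _

lemma mem_Γt {z : Fin n → ZMod d} : z ∈ Γt Γz ↔ z ∈ Γz :=
  Set.Finite.mem_toFinset _

lemma neg_mem_dual {y : Fin n → ZMod d} (hy : y ∈ dualSet (C : Set (Fin n → ZMod d))) :
    -y ∈ dualSet (C : Set (Fin n → ZMod d)) := by
  intro x hx
  rw [dotp_neg_right, hy x hx, neg_zero]

lemma exists_dotp_one (hd : d.Prime) {w : Fin n → ZMod d} (hw : w ≠ 0) :
    ∃ z0 : Fin n → ZMod d, dotp z0 w = 1 := by
  haveI : Fact d.Prime := ⟨hd⟩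
  obtain ⟨i, hi⟩ := Function.ne_iff.mp hw
  refine ⟨fun j => if j = i then (w i)⁻¹ else 0, ?_⟩
  have h : ∀ j, (if j = i then (w i)⁻¹ else 0) * w j = if j = i then (w i)⁻¹ * w i else 0 := by
    intro j; split_ifs with h
    · subst h; rfl
    · rw [zero_mul]
  rw [dotp]
  simp only [h]
  rw [Finset.sum_ite_eq' Finset.univ i fun _ => (w i)⁻¹ * w i]
  simp [inv_mul_cancel₀ (by simpa using hi)]

/-- Character sum over C vanishes off the dual. -/
lemma sum_chi_C (hd : d.Prime) {z : Fin n → ZMod d}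
    (hz : z ∉ dualSet (C : Set (Fin n → ZMod d))) :
    ∑ w ∈ Ct C, chi d (dotp z w) = 0 := by
  haveI : Fact d.Prime := ⟨hd⟩
  have hne : ¬ ∀ x ∈ (C : Set (Fin n → ZMod d)), dotp x z = 0 := hz
  push_neg at hne
  obtain ⟨w0, hw0C, hw0⟩ := hne
  set c := dotp w0 z with hc
  set w1 := c⁻¹ • w0 with hw1
  have hw1C : w1 ∈ C := C.smul_mem _ hw0C
  have hdw1 : dotp z w1 = 1 := by
    rw [dotp_comm, hw1, dotp_smul_left, ← hc, inv_mul_cancel₀ hw0]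
  refine sum_chi_zero hd.one_lt (Ct C) (fun w => dotp z w)
    (fun w => w + w1) (fun w => w - w1) ?_ ?_ ?_ ?_ ?_
  · intro w hw; rw [mem_Ct] at *; exact C.add_mem hw hw1C
  · intro w hw; rw [mem_Ct] at *; exact C.sub_mem hw hw1C
  · intro w _; exact add_sub_cancel_right w w1
  · intro w _; exact sub_add_cancel w w1
  · intro w _
    show dotp z (w + w1) = dotp z w + 1
    rw [dotp_add_right, hdw1]

/-- Character sum over the transversal vanishes for nonzero w ∈ C. -/
lemma sum_chi_Γ (hd : d.Prime) (hΓ : IsTransversal (C : Set (Fin n → ZMod d)) Γz)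
    {w : Fin n → ZMod d} (hwC : w ∈ C) (hw : w ≠ 0) :
    ∑ z ∈ Γt Γz, chi d (dotp z w) = 0 := by
  obtain ⟨z0, hz0⟩ := exists_dotp_one hd hw
  set rep : (Fin n → ZMod d) → (Fin n → ZMod d) := fun y => (hΓ y).choose with hrepdef
  have hrep : ∀ y, rep y ∈ Γz ∧ y - rep y ∈ dualSet (C : Set (Fin n → ZMod d)) :=
    fun y => (hΓ y).choose_spec.1
  have huniq : ∀ y g, g ∈ Γz ∧ y - g ∈ dualSet (C : Set (Fin n → ZMod d)) → g = rep y :=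
    fun y g h => (hΓ y).choose_spec.2 g h
  have hdw : ∀ u, u ∈ dualSet (C : Set (Fin n → ZMod d)) → dotp u w = 0 := by
    intro u hu
    rw [dotp_comm]; exact hu w hwC
  refine sum_chi_zero hd.one_lt (Γt Γz) (fun z => dotp z w)
    (fun z => rep (z + z0)) (fun z => rep (z - z0)) ?_ ?_ ?_ ?_ ?_
  · intro z _; rw [mem_Γt]; exact (hrep _).1
  · intro z _; rw [mem_Γt]; exact (hrep _).1
  · intro z hz
    rw [mem_Γt] at hz
    show rep (rep (z + z0) - z0) = z
    refine (huniq _ z ⟨hz, ?_⟩).symm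
    have h := (hrep (z + z0)).2
    have heq : rep (z + z0) - z0 - z = -((z + z0) - rep (z + z0)) := by
      funext i
      simp only [Pi.sub_apply, Pi.add_apply, Pi.neg_apply]
      ring
    rw [heq]
    exact neg_mem_dual C h
  · intro z hz
    rw [mem_Γt] at hz
    show rep (rep (z - z0) + z0) = z
    refine (huniq _ z ⟨hz, ?_⟩).symm
    have h := (hrep (z - z0)).2
    have heq : rep (z - z0) + z0 - z = -((z - z0) - rep (z - z0)) := by
      funext i
      simp only [Pi.sub_apply, Pi.add_apply, Pi.neg_apply]
      ring
    rw [heq]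
    exact neg_mem_dual C h
  · intro z _
    show dotp (rep (z + z0)) w = dotp z w + 1
    have h : dotp ((z + z0) - rep (z + z0)) w = 0 := hdw _ (hrep (z + z0)).2
    rw [dotp_sub_left, sub_eq_zero] at h
    rw [← h, dotp_add_left, hz0]

lemma mem_dual_of_neg {y : Fin n → ZMod d}
    (hy : -y ∈ dualSet (C : Set (Fin n → ZMod d))) :
    y ∈ dualSet (C : Set (Fin n → ZMod d)) := by
  have := neg_mem_dual C hy
  rwa [neg_neg] at this

lemma sum_chi_Γ_zero : ∑ z ∈ Γt Γz, chi d (dotp z (0 : Fin n → ZMod d))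
    = ((Γt Γz).card : ℂ) := by
  simp [dotp_zero_right, chi_zero]

lemma card_Γt_eq (hd : d.Prime) (hΓ : IsTransversal (C : Set (Fin n → ZMod d)) Γz) :
    (((Γt Γz).card : ℂ)) = (((Ct C).card : ℂ)) := by
  obtain ⟨g0, ⟨hg0Γ, hg0d⟩, hg0u⟩ := hΓ 0
  have hg0dual : g0 ∈ dualSet (C : Set (Fin n → ZMod d)) := by
    apply mem_dual_of_neg
    rwa [zero_sub] at hg0d
  have way1 : ∑ w ∈ Ct C, ∑ z ∈ Γt Γz, chi d (dotp z w) = ((Γt Γz).card : ℂ) := by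
    rw [Finset.sum_eq_single_of_mem 0 ((mem_Ct C).mpr C.zero_mem)]
    · exact sum_chi_Γ_zero Γz
    · intro w hw hw0
      exact sum_chi_Γ C Γz hd hΓ ((mem_Ct C).mp hw) hw0
  have way2 : ∑ w ∈ Ct C, ∑ z ∈ Γt Γz, chi d (dotp z w) = ((Ct C).card : ℂ) := by
    rw [Finset.sum_comm]
    rw [Finset.sum_eq_single_of_mem g0 ((mem_Γt Γz).mpr hg0Γ)]
    · have h1 : ∀ w ∈ Ct C, chi d (dotp g0 w) = 1 := by
        intro w hw
        rw [dotp_comm, hg0dual w ((mem_Ct C).mp hw), chi_zero]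
      rw [Finset.sum_congr rfl h1]
      simp
    · intro z hz hzne
      apply sum_chi_C C hd
      intro hzdual
      exact hzne (hg0u z ⟨(mem_Γt Γz).mp hz, by rw [zero_sub]; exact neg_mem_dual C hzdual⟩)
  rw [← way1, way2]

/-- Full transversal character sum. -/
lemma sum_chi_Γ_full (hd : d.Prime) (hΓ : IsTransversal (C : Set (Fin n → ZMod d)) Γz)
    {w : Fin n → ZMod d} (hwC : w ∈ C) :
    ∑ z ∈ Γt Γz, chi d (dotp z w) = if w = 0 then ((Ct C).card : ℂ) else 0 := by
  by_cases hw : w = 0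
  · subst hw
    rw [if_pos rfl, sum_chi_Γ_zero, card_Γt_eq C Γz hd hΓ]
  · rw [if_neg hw]
    exact sum_chi_Γ C Γz hd hΓ hwC hw

lemma card_Ct_eq_natCard : (Ct C).card = Nat.card C := by
  have h : Nat.card C = (C : Set (Fin n → ZMod d)).ncard :=
    Nat.card_coe_set_eq (C : Set (Fin n → ZMod d))
  rw [h, Set.ncard_eq_toFinset_card _ (Set.toFinite _)]
  rfl

lemma shift_eq_iff (a w v x : Fin n → ZMod d) : a = w + v + x ↔ w = a - v - x := by
  constructor
  · rintro rfl
    funext i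
    simp only [Pi.add_apply, Pi.sub_apply]
    ring
  · rintro rfl
    funext i
    simp only [Pi.add_apply, Pi.sub_apply]
    ring

lemma phiv_apply (x z v a : Fin n → ZMod d) :
    phiv C x z v a = (1 / (Real.sqrt (Nat.card C) : ℂ)) *
      (if a - v - x ∈ C then chi d (dotp z (a - v - x)) else 0) := by
  rw [phiv]
  congr 1
  rw [← Set.Finite.coe_toFinset (Set.toFinite (C : Set (Fin n → ZMod d))),
    finsum_mem_coe_finset]
  have h : ∀ w ∈ Ct C, omg d ^ (dotp z w).val * stdv (w + v + x) a
      = if w = a - v - x then chi d (dotp z w) else 0 := by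
    intro w _
    by_cases hw : w = a - v - x
    · rw [if_pos hw, stdv, if_pos ((shift_eq_iff a w v x).mpr hw), mul_one]
      rfl
    · rw [if_neg hw, stdv, if_neg (fun hc => hw ((shift_eq_iff a w v x).mp hc)), mul_zero]
  rw [show (Set.toFinite (C : Set (Fin n → ZMod d))).toFinset = Ct C from rfl]
  rw [Finset.sum_congr rfl h,
    Finset.sum_ite_eq' (Ct C) (a - v - x) (fun w => chi d (dotp z w))]
  by_cases hA : a - v - x ∈ C
  · rw [if_pos ((mem_Ct C).mpr hA), if_pos hA]
  · rw [if_neg (fun hc => hA ((mem_Ct C).mp hc)), if_neg hA]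

lemma stdv_mul_conj (c a b : Fin n → ZMod d) :
    stdv c a * starRingEnd ℂ (stdv c b) = if (a = c ∧ b = c) then 1 else 0 := by
  by_cases h1 : a = c <;> by_cases h2 : b = c <;> simp [stdv, h1, h2]

lemma rhs_entry (x v a b : Fin n → ZMod d) :
    ∑ w ∈ Ct C, outer (stdv (w + v + x)) a b
      = if (a - v - x ∈ C ∧ a = b) then 1 else 0 := by
  have h : ∀ w ∈ Ct C, outer (stdv (w + v + x)) a b
      = if (a = w + v + x ∧ b = w + v + x) then 1 else 0 := by
    intro w _
    rw [outer, Matrix.vecMulVec_apply, stdv_mul_conj]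
  rw [Finset.sum_congr rfl h]
  by_cases hab : a = b
  · subst hab
    have h2 : ∀ w ∈ Ct C, (if (a = w + v + x ∧ a = w + v + x) then (1:ℂ) else 0)
        = if w = a - v - x then 1 else 0 := by
      intro w _
      simp only [and_self]
      by_cases hw : a = w + v + x
      · rw [if_pos hw, if_pos ((shift_eq_iff a w v x).mp hw)]
      · rw [if_neg hw, if_neg (fun hc => hw ((shift_eq_iff a w v x).mpr hc))]
    rw [Finset.sum_congr rfl h2, Finset.sum_ite_eq' (Ct C) (a - v - x) (fun _ => (1:ℂ))]
    by_cases hA : a - v - x ∈ C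
    · rw [if_pos ((mem_Ct C).mpr hA), if_pos ⟨hA, rfl⟩]
    · rw [if_neg (fun hc => hA ((mem_Ct C).mp hc)), if_neg (fun hc => hA hc.1)]
  · rw [if_neg (fun hc => hab hc.2), Finset.sum_eq_zero]
    intro w _
    rw [if_neg]
    rintro ⟨h1, h2⟩
    exact hab (h1.trans h2.symm)

lemma lhs_entry (hd : d.Prime) (hΓ : IsTransversal (C : Set (Fin n → ZMod d)) Γz)
    (x v a b : Fin n → ZMod d) :
    ∑ z ∈ Γt Γz, outer (phiv C x z v) a b
      = if (a - v - x ∈ C ∧ a = b) then 1 else 0 := by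
  haveI : Fact d.Prime := ⟨hd⟩
  haveI : Nonempty C := ⟨⟨0, C.zero_mem⟩⟩
  set N := Nat.card C with hNdef
  have hN : 0 < N := Nat.card_pos
  have hNne : ((N : ℂ)) ≠ 0 := by
    simp only [ne_eq, Nat.cast_eq_zero]
    omega
  have hsq : (1 / ((Real.sqrt N : ℝ) : ℂ)) * starRingEnd ℂ (1 / ((Real.sqrt N : ℝ) : ℂ))
      = 1 / (N : ℂ) := by
    have hm : ((Real.sqrt N : ℝ) : ℂ) * ((Real.sqrt N : ℝ) : ℂ) = ((N : ℝ) : ℂ) := by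
      rw [← Complex.ofReal_mul, Real.mul_self_sqrt (Nat.cast_nonneg N)]
    rw [map_div₀, map_one, Complex.conj_ofReal, div_mul_div_comm, one_mul, hm]
    norm_num
  have hout : ∀ z, outer (phiv C x z v) a b
      = (1 / (N : ℂ)) * ((if a - v - x ∈ C then chi d (dotp z (a - v - x)) else 0)
        * (if b - v - x ∈ C then chi d (-(dotp z (b - v - x))) else 0)) := by
    intro z
    rw [outer, Matrix.vecMulVec_apply, phiv_apply, phiv_apply, map_mul,
      apply_ite (starRingEnd ℂ), map_zero, conj_chi, ← hNdef]
    rw [show (1 / ((Real.sqrt N : ℝ) : ℂ)) *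
        (if a - v - x ∈ C then chi d (dotp z (a - v - x)) else 0) *
        ((starRingEnd ℂ) (1 / ((Real.sqrt N : ℝ) : ℂ)) *
        (if b - v - x ∈ C then chi d (-(dotp z (b - v - x))) else 0))
      = ((1 / ((Real.sqrt N : ℝ) : ℂ)) * (starRingEnd ℂ) (1 / ((Real.sqrt N : ℝ) : ℂ))) *
        ((if a - v - x ∈ C then chi d (dotp z (a - v - x)) else 0) *
        (if b - v - x ∈ C then chi d (-(dotp z (b - v - x))) else 0)) from by ring]
    rw [hsq]
  simp only [hout]
  rw [← Finset.mul_sum]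
  by_cases hA : a - v - x ∈ C
  · by_cases hB : b - v - x ∈ C
    · simp only [if_pos hA, if_pos hB]
      have hchi0 : ∀ (z A B : Fin n → ZMod d),
          chi d (dotp z (A - B)) = chi d (dotp z A) * chi d (-(dotp z B)) := by
        intro z A B
        rw [dotp_sub_right, sub_eq_add_neg, chi_add]
      have hchi : ∀ z : Fin n → ZMod d,
          chi d (dotp z (a - v - x)) * chi d (-(dotp z (b - v - x)))
          = chi d (dotp z ((a - v - x) - (b - v - x))) := by
        intro z
        rw [hchi0 z (a - v - x) (b - v - x)]
      rw [Finset.sum_congr rfl (fun z _ => hchi z)]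
      rw [sum_chi_Γ_full C Γz hd hΓ (C.sub_mem hA hB)]
      have hab' : (a - v - x) - (b - v - x) = a - b := by
        funext i
        simp only [Pi.sub_apply]
        ring
      rw [hab', card_Ct_eq_natCard, ← hNdef]
      by_cases hab : a = b
      · rw [if_pos (by rw [hab, sub_self]), if_pos ⟨hA, hab⟩, one_div_mul_cancel hNne]
      · rw [if_neg (fun hc => hab (sub_eq_zero.mp hc)), mul_zero,
          if_neg (fun hc => hab hc.2)]
    · simp only [if_neg hB, mul_zero, Finset.sum_const_zero, mul_zero]
      rw [if_neg]
      rintro ⟨h1, rfl⟩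
      exact hB hA
  · simp only [if_neg hA, zero_mul, Finset.sum_const_zero, mul_zero]
    rw [if_neg (fun hc => hA hc.1)]

end Sums

end Stmt15

theorem stmt_15 (d : ℕ) [NeZero d] (hd : d.Prime) (n : ℕ)
    (C : Submodule (ZMod d) (Fin n → ZMod d)) (Γz : Set (Fin n → ZMod d))
    (hΓ : IsTransversal (C : Set (Fin n → ZMod d)) Γz) (x v : Fin n → ZMod d) :
    ((1 : ℂ) / (Nat.card C : ℂ)) • (∑ᶠ z ∈ Γz, outer (phiv C x z v)) =
      ((1 : ℂ) / (Nat.card C : ℂ)) •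
        (∑ᶠ w ∈ (C : Set (Fin n → ZMod d)), outer (stdv (w + v + x))) := by
  congr 1
  rw [← Set.Finite.coe_toFinset (Set.toFinite Γz), finsum_mem_coe_finset,
      ← Set.Finite.coe_toFinset (Set.toFinite (C : Set (Fin n → ZMod d))),
      finsum_mem_coe_finset]
  ext a b
  rw [Matrix.sum_apply, Matrix.sum_apply]
  rw [show (Set.toFinite Γz).toFinset = Stmt15.Γt Γz from rfl,
      show (Set.toFinite (C : Set (Fin n → ZMod d))).toFinset = Stmt15.Ct C from rfl]
  rw [Stmt15.lhs_entry C Γz hd hΓ x v a b, Stmt15.rhs_entry C x v a b]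

end
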